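/- Let A be a perfect reduced group with action with zero weak stabilizer. Then the set PA(A) of pentactions of A, with addition (b+b') and action b^{b'} defined componentwise as in the paper, zero element the trivial pentaction b₀, and negation −b given componentwise by (−b)·a = a·b, a·(−b) = b·a, a^{(−b)} = ^b a, ^{(−b)}a = a^b, (−b)^a = −((b^a)·b), is itself a reduced group with action. In particular addition in PA(A) is associative, b + (−b) = (−b) + b = b₀, the action axioms (b+b')^{b''} = b^{b''} + b'^{b''}, b^{(b'+b'')} = (b^{b'})^{b''}, b^{b₀} = b hold, and the reduced axioms b^{b'} + b'' = b'' + b^{b'} for b' ≠ b₀ and b^{(b'^{b''})} = b^{b'} hold. -/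

import Mathlib

/-- A reduced group with action: a (not necessarily abelian) additive group `G`
with a self-action `act g h` (written `g^h` in the paper) satisfying the group-action
axioms and the two reduced axioms. -/
structure RGwa (G : Type*) [AddGroup G] where
  act : G → G → G
  act_add : ∀ g g' h, act (g + g') h = act g h + act g' h
  add_act : ∀ g h h', act g (h + h') = act (act g h) h'
  act_zero : ∀ g, act g 0 = g
  reduced_comm : ∀ x y z, y ≠ 0 → act x y + z = z + act x y
  reduced_act : ∀ x y z, act x (act y z) = act x y

/-- A pentaction of a reduced group with action `A`: a quintuple of functions
`(b·-, -·b, (-)^b, ^b(-), b^(-))` satisfying conditions 1–12 of the paper. -/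
structure Pentaction {A : Type*} [AddGroup A] (R : RGwa A) where
  dotl : A → A                -- b · -
  dotr : A → A                -- - · b
  pw : A → A                  -- (-)^b
  lpw : A → A                 -- ^b(-)
  bp : A → A                  -- b^(-)
  c1 : ∀ a a', dotl (a + a') = dotl a + dotl a'
  c1' : ∀ a a', dotr (a + a') = dotr a + dotr a'
  c2 : ∀ a a', pw (a + a') = pw a + pw a'
  c2' : ∀ a a', lpw (a + a') = lpw a + lpw a'
  c3 : ∀ a a', a' ≠ 0 → R.act (dotl a) a' = R.act a a'
  c3' : ∀ a a', a' ≠ 0 → R.act (dotr a) a' = R.act a a'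
  c4 : ∀ a a', bp (a + a') = R.act (bp a) a' + bp a'
  c5 : ∀ a a', pw (R.act a (dotl a')) = R.act (pw a) a'
  c5' : ∀ a a', lpw (R.act a (-(dotr a'))) = R.act (lpw a) (-a')
  c6 : ∀ a a', a' ≠ 0 → dotl (R.act a a') = R.act a a'
  c6' : ∀ a a', a' ≠ 0 → dotr (R.act a a') = R.act a a'
  c7 : ∀ a a', bp (R.act a a') = bp a
  c8 : (∃ a, pw a ≠ a) → ∀ a a', pw a + a' = a' + pw a
  c8' : (∃ a, lpw a ≠ a) → ∀ a a', lpw a + a' = a' + lpw a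
  c9 : ∀ a a', R.act a (pw a') = R.act a a'
  c9' : ∀ a a', R.act a (lpw a') = R.act a a'
  c10 : ∀ a a', a' ≠ 0 → R.act a (bp a') = a
  c11 : ∀ a, dotr (dotl a) = a ∧ dotl (dotr a) = a
  c12 : ∀ a, lpw (pw a) = a ∧ pw (lpw a) = a

/-- `A` is perfect: the subobject `A^A` generated by all elements `a^{a'}` is all of `A`.
(Note that the generating set is closed under the action, so the subobject generated
is just the additive subgroup generated.) -/
def RGwa.Perfect {A : Type*} [AddGroup A] (R : RGwa A) : Prop :=
  AddSubgroup.closure {x | ∃ a a', x = R.act a a'} = ⊤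

/-- The weak stabilizer of `A` is zero: all elements of the forms
`b^{(b'^a)}`, `b^{(a^{b'})} − b^a` and `a^{(b+b')} − a^{(b'+b)}` vanish. -/
def RGwa.wStZero {A : Type*} [AddGroup A] (R : RGwa A) : Prop :=
  ∀ (b b' : Pentaction R) (a : A),
    b.bp (b'.bp a) = 0 ∧
    b.bp (b'.pw a) - b.bp a = 0 ∧
    b'.pw (b.pw a) - b.pw (b'.pw a) = 0

section Aux
variable {A : Type*} [AddGroup A] {R : RGwa A}

namespace RGwa

lemma act_zero_left (R : RGwa A) (y : A) : R.act 0 y = 0 := by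
  have h := R.act_add 0 0 y
  rw [add_zero] at h
  exact left_eq_add.mp h

lemma act_neg_left (R : RGwa A) (g y : A) : R.act (-g) y = -(R.act g y) := by
  have h := R.act_add g (-g) y
  rw [add_neg_cancel, R.act_zero_left] at h
  exact (neg_eq_of_add_eq_zero_right h.symm).symm

/-- An act-trivial element is central. -/
lemma trivial_central (R : RGwa A) (u : A) (hu : ∀ x, R.act x u = x) :
    ∀ z, u + z = z + u := by
  intro z
  by_cases h0 : u = 0
  · simp [h0]
  · have := R.reduced_comm u u z h0
    rwa [hu u] at this

end RGwa

namespace Pentaction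
variable (b : Pentaction R)

lemma dotl_zero : b.dotl 0 = 0 := by
  have h := b.c1 0 0; rw [add_zero] at h; exact left_eq_add.mp h

lemma dotr_zero : b.dotr 0 = 0 := by
  have h := b.c1' 0 0; rw [add_zero] at h; exact left_eq_add.mp h

lemma pw_zero : b.pw 0 = 0 := by
  have h := b.c2 0 0; rw [add_zero] at h; exact left_eq_add.mp h

lemma lpw_zero : b.lpw 0 = 0 := by
  have h := b.c2' 0 0; rw [add_zero] at h; exact left_eq_add.mp h

lemma bp_zero : b.bp 0 = 0 := by
  have h := b.c4 0 0
  rw [add_zero, R.act_zero] at h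
  exact left_eq_add.mp h

lemma dotr_neg (a : A) : b.dotr (-a) = -(b.dotr a) := by
  have h := b.c1' a (-a)
  rw [add_neg_cancel, b.dotr_zero] at h
  exact (neg_eq_of_add_eq_zero_right h.symm).symm

lemma lpw_pw (a : A) : b.lpw (b.pw a) = a := (b.c12 a).1
lemma pw_lpw (a : A) : b.pw (b.lpw a) = a := (b.c12 a).2

lemma pw_inj : Function.Injective b.pw :=
  Function.LeftInverse.injective b.lpw_pw

lemma pw_act (x y : A) : b.pw (R.act x y) = R.act (b.pw x) y := by
  by_cases hy : y = 0
  · rw [hy, R.act_zero, R.act_zero]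
  · have h := b.c5 x (R.act y y)
    rw [b.c6 y y hy, R.reduced_act, R.reduced_act] at h
    exact h

lemma lpw_act (x y : A) : b.lpw (R.act x y) = R.act (b.lpw x) y := by
  by_cases hy : y = 0
  · rw [hy, R.act_zero, R.act_zero]
  · have h := b.c5' x (-(R.act y y))
    rw [b.dotr_neg, neg_neg, neg_neg, b.c6' y y hy, R.reduced_act, R.reduced_act] at h
    exact h

lemma act_dotl (z a : A) : R.act z (b.dotl a) = R.act z a := by
  have h := b.c5 (b.lpw z) a
  rw [b.pw_act, b.pw_lpw] at h
  exact h

lemma act_dotr (z a : A) : R.act z (b.dotr a) = R.act z a := by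
  have key : ∀ w, R.act w (-(b.dotr a)) = R.act w (-a) := by
    intro w
    have h := b.c5' (b.pw w) a
    rw [b.lpw_act, b.lpw_pw] at h
    exact h
  have h1 : R.act (R.act z a) (-a) = z := by
    rw [← R.add_act, add_neg_cancel, R.act_zero]
  calc R.act z (b.dotr a)
      = R.act (R.act (R.act z a) (-a)) (b.dotr a) := by rw [h1]
    _ = R.act (R.act (R.act z a) (-(b.dotr a))) (b.dotr a) := by rw [key]
    _ = R.act (R.act z a) (-(b.dotr a) + b.dotr a) := by rw [R.add_act]
    _ = R.act z a := by rw [neg_add_cancel, R.act_zero]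

lemma dotl_id (a : A) : b.dotl a = a := by
  by_cases hT : ∃ t : A, t ≠ 0 ∧ ∀ x, R.act x t = x
  · obtain ⟨t, ht0, ht⟩ := hT
    have h := b.c3 a t ht0
    rwa [ht, ht] at h
  · by_contra hne
    apply hT
    refine ⟨-a + b.dotl a, fun h0 => hne (neg_add_eq_zero.mp h0).symm, fun x => ?_⟩
    rw [R.add_act, b.act_dotl, ← R.add_act, neg_add_cancel, R.act_zero]

lemma dotr_id (a : A) : b.dotr a = a := by
  by_cases hT : ∃ t : A, t ≠ 0 ∧ ∀ x, R.act x t = x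
  · obtain ⟨t, ht0, ht⟩ := hT
    have h := b.c3' a t ht0
    rwa [ht, ht] at h
  · by_contra hne
    apply hT
    refine ⟨-a + b.dotr a, fun h0 => hne (neg_add_eq_zero.mp h0).symm, fun x => ?_⟩
    rw [R.add_act, b.act_dotr, ← R.add_act, neg_add_cancel, R.act_zero]

lemma bp_trivial (a x : A) : R.act x (b.bp a) = x := by
  by_cases ha : a = 0
  · rw [ha, b.bp_zero, R.act_zero]
  · exact b.c10 x a ha

lemma bp_neg_trivial (a x : A) : R.act x (-(b.bp a)) = x := by
  conv_rhs => rw [← R.act_zero x, ← neg_add_cancel (b.bp a), R.add_act,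
    b.bp_trivial]

lemma pw_id_or_central :
    (∀ a, b.pw a = a) ∨ (∀ a a', b.pw a + a' = a' + b.pw a) := by
  by_cases h : ∀ a, b.pw a = a
  · exact Or.inl h
  · push_neg at h
    exact Or.inr (b.c8 h)

lemma lpw_id_or_central :
    (∀ a, b.lpw a = a) ∨ (∀ a a', b.lpw a + a' = a' + b.lpw a) := by
  by_cases h : ∀ a, b.lpw a = a
  · exact Or.inl h
  · push_neg at h
    exact Or.inr (b.c8' h)

theorem ext' {b b' : Pentaction R} (h1 : b.dotl = b'.dotl) (h2 : b.dotr = b'.dotr)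
    (h3 : b.pw = b'.pw) (h4 : b.lpw = b'.lpw) (h5 : b.bp = b'.bp) : b = b' := by
  cases b; cases b'
  simp only at h1 h2 h3 h4 h5
  subst h1 h2 h3 h4 h5
  rfl

end Pentaction
end Aux


section Defs
variable {A : Type*} [AddGroup A] {R : RGwa A}
open Pentaction

/-- The zero pentaction. -/
def PAzero (R : RGwa A) : Pentaction R where
  dotl := fun a => a
  dotr := fun a => a
  pw := fun a => a
  lpw := fun a => a
  bp := fun _ => 0
  c1 := fun _ _ => rfl
  c1' := fun _ _ => rfl
  c2 := fun _ _ => rfl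
  c2' := fun _ _ => rfl
  c3 := fun _ _ _ => rfl
  c3' := fun _ _ _ => rfl
  c4 := fun _ a' => by rw [R.act_zero_left, zero_add]
  c5 := fun _ _ => rfl
  c5' := fun _ _ => rfl
  c6 := fun _ _ _ => rfl
  c6' := fun _ _ _ => rfl
  c7 := fun _ _ => rfl
  c8 := fun h => absurd rfl h.choose_spec
  c8' := fun h => absurd rfl h.choose_spec
  c9 := fun _ _ => rfl
  c9' := fun _ _ => rfl
  c10 := fun a _ _ => R.act_zero a
  c11 := fun _ => ⟨rfl, rfl⟩
  c12 := fun _ => ⟨rfl, rfl⟩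

/-- Sum of pentactions. -/
def PAadd (b b' : Pentaction R) : Pentaction R where
  dotl := fun a => b.dotl (b'.dotl a)
  dotr := fun a => b'.dotr (b.dotr a)
  pw := fun a => b'.pw (b.pw a)
  lpw := fun a => b.lpw (b'.lpw a)
  bp := fun a => b.bp a + b.dotl (b'.bp a)
  c1 := fun a a' => by rw [b'.c1, b.c1]
  c1' := fun a a' => by rw [b.c1', b'.c1']
  c2 := fun a a' => by rw [b.c2, b'.c2]
  c2' := fun a a' => by rw [b'.c2', b.c2']
  c3 := fun a a' h => by simp only [dotl_id]
  c3' := fun a a' h => by simp only [dotr_id]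
  c4 := fun a a' => by
    simp only [dotl_id]
    by_cases ha' : a' = 0
    · simp [ha', R.act_zero, bp_zero]
    · rw [b.c4, b'.c4, R.act_add]
      have hc : R.act (b'.bp a) a' + b.bp a' = b.bp a' + R.act (b'.bp a) a' :=
        R.reduced_comm _ _ _ ha'
      rw [add_assoc, add_assoc]
      congr 1
      rw [← add_assoc, ← hc, add_assoc]
  c5 := fun a a' => by simp only [dotl_id, pw_act]
  c5' := fun a a' => by simp only [dotr_id, lpw_act]
  c6 := fun a a' h => by simp only [dotl_id]
  c6' := fun a a' h => by simp only [dotr_id]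
  c7 := fun a a' => by simp only [dotl_id, b.c7, b'.c7]
  c8 := by
    intro hex a a'
    rcases b'.pw_id_or_central with hb' | hb'
    · rcases b.pw_id_or_central with hb | hb
      · exfalso; obtain ⟨x, hx⟩ := hex; exact hx (by rw [hb x, hb' x])
      · rw [hb' (b.pw a)]; exact hb _ _
    · exact hb' _ _
  c8' := by
    intro hex a a'
    rcases b.lpw_id_or_central with hb | hb
    · rcases b'.lpw_id_or_central with hb' | hb'
      · exfalso; obtain ⟨x, hx⟩ := hex; exact hx (by rw [hb' x, hb x])
      · rw [hb (b'.lpw a)]; exact hb' _ _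
    · exact hb _ _
  c9 := fun a a' => by rw [b'.c9, b.c9]
  c9' := fun a a' => by rw [b.c9', b'.c9']
  c10 := fun a a' _ => by
    simp only [dotl_id]
    rw [R.add_act, b.bp_trivial, b'.bp_trivial]
  c11 := fun a => by simp [dotl_id, dotr_id]
  c12 := fun a => ⟨by rw [b'.lpw_pw, b.lpw_pw],
    by rw [b.pw_lpw, b'.pw_lpw]⟩

/-- Negation of a pentaction. -/
def PAneg (b : Pentaction R) : Pentaction R where
  dotl := b.dotr
  dotr := b.dotl
  pw := b.lpw
  lpw := b.pw
  bp := fun a => -(b.dotr (b.bp a))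
  c1 := b.c1'
  c1' := b.c1
  c2 := b.c2'
  c2' := b.c2
  c3 := b.c3'
  c3' := b.c3
  c4 := fun a a' => by
    simp only [dotr_id]
    by_cases ha' : a' = 0
    · simp [ha', R.act_zero, b.bp_zero]
    · rw [b.c4, R.act_neg_left, neg_add_rev]
      have hc := R.reduced_comm (-(b.bp a)) a' (-(b.bp a')) ha'
      rw [R.act_neg_left] at hc
      exact hc.symm
  c5 := fun a a' => by simp only [dotr_id, lpw_act]
  c5' := fun a a' => by simp only [dotl_id, pw_act]
  c6 := fun a a' h => by simp only [dotr_id]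
  c6' := fun a a' h => by simp only [dotl_id]
  c7 := fun a a' => by rw [b.c7]
  c8 := b.c8'
  c8' := b.c8
  c9 := b.c9'
  c9' := b.c9
  c10 := fun a a' _ => by simp only [dotr_id]; exact b.bp_neg_trivial a' a
  c11 := fun a => ⟨(b.c11 a).2, (b.c11 a).1⟩
  c12 := fun a => ⟨(b.c12 a).2, (b.c12 a).1⟩

/-- The action of a pentaction on a pentaction. -/
def PApact (b b' : Pentaction R) : Pentaction R where
  dotl := fun a => a
  dotr := fun a => a
  pw := b.pw
  lpw := b.lpw
  bp := fun a => b'.pw (b.bp (b'.dotl a))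
  c1 := fun _ _ => rfl
  c1' := fun _ _ => rfl
  c2 := b.c2
  c2' := b.c2'
  c3 := fun _ _ _ => rfl
  c3' := fun _ _ _ => rfl
  c4 := fun a a' => by
    simp only [dotl_id]
    rw [b.c4, b'.c2, b'.pw_act]
  c5 := fun a a' => b.pw_act a a'
  c5' := fun a a' => b.lpw_act a (-a')
  c6 := fun _ _ _ => rfl
  c6' := fun _ _ _ => rfl
  c7 := fun a a' => by simp only [dotl_id, b.c7]
  c8 := b.c8
  c8' := b.c8'
  c9 := b.c9
  c9' := b.c9'
  c10 := fun a a' _ => by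
    simp only [dotl_id]
    rw [b'.c9, b.bp_trivial]
  c11 := fun _ => ⟨rfl, rfl⟩
  c12 := b.c12

end Defs

section Proj
variable {A : Type*} [AddGroup A] {R : RGwa A}

@[simp] lemma PAadd_dotl (b b' : Pentaction R) (a : A) :
    (PAadd b b').dotl a = b.dotl (b'.dotl a) := rfl
@[simp] lemma PAadd_dotr (b b' : Pentaction R) (a : A) :
    (PAadd b b').dotr a = b'.dotr (b.dotr a) := rfl
@[simp] lemma PAadd_pw (b b' : Pentaction R) (a : A) :
    (PAadd b b').pw a = b'.pw (b.pw a) := rfl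
@[simp] lemma PAadd_lpw (b b' : Pentaction R) (a : A) :
    (PAadd b b').lpw a = b.lpw (b'.lpw a) := rfl
@[simp] lemma PAadd_bp (b b' : Pentaction R) (a : A) :
    (PAadd b b').bp a = b.bp a + b.dotl (b'.bp a) := rfl
@[simp] lemma PAneg_dotl (b : Pentaction R) (a : A) : (PAneg b).dotl a = b.dotr a := rfl
@[simp] lemma PAneg_dotr (b : Pentaction R) (a : A) : (PAneg b).dotr a = b.dotl a := rfl
@[simp] lemma PAneg_pw (b : Pentaction R) (a : A) : (PAneg b).pw a = b.lpw a := rfl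
@[simp] lemma PAneg_lpw (b : Pentaction R) (a : A) : (PAneg b).lpw a = b.pw a := rfl
@[simp] lemma PAneg_bp (b : Pentaction R) (a : A) :
    (PAneg b).bp a = -(b.dotr (b.bp a)) := rfl
@[simp] lemma PAzero_dotl (a : A) : (PAzero R).dotl a = a := rfl
@[simp] lemma PAzero_dotr (a : A) : (PAzero R).dotr a = a := rfl
@[simp] lemma PAzero_pw (a : A) : (PAzero R).pw a = a := rfl
@[simp] lemma PAzero_lpw (a : A) : (PAzero R).lpw a = a := rfl
@[simp] lemma PAzero_bp (a : A) : (PAzero R).bp a = 0 := rfl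
@[simp] lemma PApact_dotl (b b' : Pentaction R) (a : A) : (PApact b b').dotl a = a := rfl
@[simp] lemma PApact_dotr (b b' : Pentaction R) (a : A) : (PApact b b').dotr a = a := rfl
@[simp] lemma PApact_pw (b b' : Pentaction R) (a : A) : (PApact b b').pw a = b.pw a := rfl
@[simp] lemma PApact_lpw (b b' : Pentaction R) (a : A) : (PApact b b').lpw a = b.lpw a := rfl
@[simp] lemma PApact_bp (b b' : Pentaction R) (a : A) :
    (PApact b b').bp a = b'.pw (b.bp (b'.dotl a)) := rfl

end Proj

open Pentaction in
/-- if `A` is perfect with zero weak stabilizer, then the set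
`PA(A)` of pentactions, with the operations defined componentwise as in the
paper, is itself a reduced group with action. -/
theorem PA_is_rgwa {A : Type*} [AddGroup A] (R : RGwa A)
    (hP : R.Perfect) (hW : R.wStZero) :
    ∃ (add : Pentaction R → Pentaction R → Pentaction R)
      (neg : Pentaction R → Pentaction R)
      (zero : Pentaction R)
      (pact : Pentaction R → Pentaction R → Pentaction R),
      -- addition is defined componentwise as in the paper
      (∀ b b' a, (add b b').dotl a = b.dotl (b'.dotl a)) ∧
      (∀ b b' a, (add b b').dotr a = b'.dotr (b.dotr a)) ∧
      (∀ b b' a, (add b b').pw a = b'.pw (b.pw a)) ∧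
      (∀ b b' a, (add b b').lpw a = b.lpw (b'.lpw a)) ∧
      (∀ b b' a, (add b b').bp a = b.bp a + b.dotl (b'.bp a)) ∧
      -- the zero pentaction
      (∀ a, zero.dotl a = a) ∧ (∀ a, zero.dotr a = a) ∧
      (∀ a, zero.pw a = a) ∧ (∀ a, zero.lpw a = a) ∧ (∀ a, zero.bp a = 0) ∧
      -- negation is defined componentwise as in the paper
      (∀ b a, (neg b).dotl a = b.dotr a) ∧
      (∀ b a, (neg b).dotr a = b.dotl a) ∧
      (∀ b a, (neg b).pw a = b.lpw a) ∧
      (∀ b a, (neg b).lpw a = b.pw a) ∧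
      (∀ b a, (neg b).bp a = -(b.dotr (b.bp a))) ∧
      -- the action composite is defined componentwise as in the paper
      (∀ b b' a, (pact b b').dotl a = a) ∧
      (∀ b b' a, (pact b b').dotr a = a) ∧
      (∀ b b' a, (pact b b').pw a = b.pw a) ∧
      (∀ b b' a, (pact b b').lpw a = b.lpw a) ∧
      (∀ b b' a, (pact b b').bp a = b'.pw (b.bp (b'.dotl a))) ∧
      -- group axioms
      (∀ b b' b'', add (add b b') b'' = add b (add b' b'')) ∧
      (∀ b, add b zero = b) ∧ (∀ b, add zero b = b) ∧
      (∀ b, add b (neg b) = zero) ∧ (∀ b, add (neg b) b = zero) ∧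
      -- group-with-action axioms
      (∀ b b' b'', pact (add b b') b'' = add (pact b b'') (pact b' b'')) ∧
      (∀ b b' b'', pact b (add b' b'') = pact (pact b b') b'') ∧
      (∀ b, pact b zero = b) ∧
      -- reduced axioms
      (∀ b b' b'', b' ≠ zero → add (pact b b') b'' = add b'' (pact b b')) ∧
      (∀ b b' b'', pact b (pact b' b'') = pact b b') := by
  have hpw : ∀ (b c : Pentaction R) (a : A), c.pw (b.pw a) = b.pw (c.pw a) :=
    fun b c a => sub_eq_zero.mp ((hW b c a).2.2)
  have hlpw : ∀ (b c : Pentaction R) (a : A), c.lpw (b.lpw a) = b.lpw (c.lpw a) := by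
    intro b c a
    apply b.pw_inj
    rw [b.pw_lpw]
    apply c.pw_inj
    rw [hpw b c, c.pw_lpw, b.pw_lpw, c.pw_lpw]
  refine ⟨PAadd, PAneg, PAzero R, PApact,
    fun _ _ _ => rfl, fun _ _ _ => rfl, fun _ _ _ => rfl, fun _ _ _ => rfl,
    fun _ _ _ => rfl,
    fun _ => rfl, fun _ => rfl, fun _ => rfl, fun _ => rfl, fun _ => rfl,
    fun _ _ => rfl, fun _ _ => rfl, fun _ _ => rfl, fun _ _ => rfl, fun _ _ => rfl,
    fun _ _ _ => rfl, fun _ _ _ => rfl, fun _ _ _ => rfl, fun _ _ _ => rfl,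
    fun _ _ _ => rfl,
    ?_, ?_, ?_, ?_, ?_, ?_, ?_, ?_, ?_, ?_⟩
  · -- associativity
    intro b b' b''
    apply Pentaction.ext' <;> funext a <;>
      simp [dotl_id, add_assoc]
  · -- add b zero = b
    intro b
    apply Pentaction.ext' <;> funext a <;> simp [dotl_id]
  · -- add zero b = b
    intro b
    apply Pentaction.ext' <;> funext a <;> simp [dotl_id]
  · -- add b (neg b) = zero
    intro b
    apply Pentaction.ext' <;> funext a <;> simp [dotl_id, dotr_id, lpw_pw, pw_lpw]
  · -- add (neg b) b = zero
    intro b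
    apply Pentaction.ext' <;> funext a <;> simp [dotl_id, dotr_id, lpw_pw, pw_lpw]
  · -- pact (add b b') b'' = add (pact b b'') (pact b' b'')
    intro b b' b''
    apply Pentaction.ext' <;> funext a <;> simp [dotl_id, Pentaction.c2]
  · -- pact b (add b' b'') = pact (pact b b') b''
    intro b b' b''
    apply Pentaction.ext' <;> funext a <;> simp [dotl_id]
  · -- pact b zero = b
    intro b
    apply Pentaction.ext' <;> funext a <;> simp [dotl_id, dotr_id]
  · -- reduced comm
    intro b b' b'' _
    apply Pentaction.ext' <;> funext a
    · rfl
    · rfl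
    · exact hpw b b'' a
    · exact (hlpw b b'' a).symm
    · simp only [PAadd_bp, PApact_dotl, PApact_bp, dotl_id]
      exact R.trivial_central (b'.pw (b.bp a))
        (fun x => by rw [b'.c9, b.bp_trivial]) (b''.bp a)
  · -- reduced act
    intro b b' b''
    apply Pentaction.ext' <;> funext a <;> simp [dotl_id]
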